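/- Fix an integer d ≥ 1, T > 0, 0 ≤ t₁ ≤ t₂ ≤ T, and a function f : [0,T] × {1,…,d} → ℝ such that for each i the function s ↦ f(s,i) is continuous on [0,T] and of bounded variation on [t₁,t₂]. Then for all μ, ν ∈ 𝕄_T with kernels K_μ, K_ν and every i ∈ {1,…,d}: | ∫_{t₁}^{t₂} f(s,i) (K_μ(s,i) − K_ν(s,i)) ds | ≤ ( |f(t₁,i)| + |f(t₂,i)| + TV(f(·,i); [t₁,t₂]) ) · d_T(μ,ν), where TV(f(·,i); [t₁,t₂]) denotes the total variation of s ↦ f(s,i) over [t₁,t₂]. -/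

import Mathlib

open MeasureTheory Set

lemma int_bdd_aux {μ : Measure ℝ} {s : Set ℝ} (hs : MeasurableSet s) (hfin : μ s ≠ ⊤)
    {f : ℝ → ℝ} (hf : AEStronglyMeasurable f μ) {C : ℝ}
    (hC : ∀ x ∈ s, |f x| ≤ C) : IntegrableOn f s μ :=
  Measure.integrableOn_of_bounded hfin hf (by
    filter_upwards [ae_restrict_mem hs] with x hx using by
      rw [Real.norm_eq_abs]; exact hC x hx)

lemma rightLim_eq_of_eventually_const {r : ℝ → ℝ} (x : ℝ) (hx : ∀ y, x < y → r y = r x) :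
    Function.rightLim r x = r x := by
  apply rightLim_eq_of_tendsto
  refine Filter.Tendsto.congr' ?_ tendsto_const_nhds
  filter_upwards [self_mem_nhdsWithin] with y hy
  exact (hx y hy).symm

lemma rightLim_eq_of_contAt {r : ℝ → ℝ} {x : ℝ} (hx : ContinuousAt r x) :
    Function.rightLim r x = r x :=
  rightLim_eq_of_tendsto
    (hx.tendsto.mono_left nhdsWithin_le_nhds)

lemma fubini_aux (t₁ t₂ : ℝ) (τ : Measure ℝ) [IsFiniteMeasure τ]
    (h : ℝ → ℝ) (hm : Measurable h) (hb : ∀ s, |h s| ≤ 1) :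
    ∫ s in Set.Ioc t₁ t₂, h s * (τ (Set.Ioc t₁ s)).toReal
      = ∫ u in Set.Ioc t₁ t₂, (∫ s in Set.Ioc u t₂, h s) ∂τ := by
  set J := Set.Ioc t₁ t₂ with hJ
  have hJm : MeasurableSet J := measurableSet_Ioc
  haveI : IsFiniteMeasure (volume.restrict J) :=
    ⟨by rw [Measure.restrict_apply_univ]; exact measure_Ioc_lt_top⟩
  haveI : IsFiniteMeasure (τ.restrict J) :=
    ⟨by rw [Measure.restrict_apply_univ]; exact measure_lt_top τ J⟩
  set F : ℝ → ℝ → ℝ := fun s u => h s * Set.indicator (Set.Ioc t₁ s) (fun _ => (1:ℝ)) u with hF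
  have hFm : Measurable (Function.uncurry F) := by
    have : Function.uncurry F = fun p : ℝ × ℝ =>
        h p.1 * Set.indicator {q : ℝ × ℝ | t₁ < q.2 ∧ q.2 ≤ q.1} (fun _ => (1:ℝ)) p := by
      funext p
      simp only [Function.uncurry, hF, Set.indicator_apply, Set.mem_Ioc, Set.mem_setOf_eq]
    rw [this]
    exact (hm.comp measurable_fst).mul (measurable_const.indicator
      ((measurableSet_lt measurable_const measurable_snd).inter
        (measurableSet_le measurable_snd measurable_fst)))
  have hFb : ∀ p : ℝ × ℝ, ‖Function.uncurry F p‖ ≤ 1 := by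
    intro p
    rw [Real.norm_eq_abs, Function.uncurry, abs_mul]
    have h2 : |Set.indicator (Set.Ioc t₁ p.1) (fun _ => (1:ℝ)) p.2| ≤ 1 := by
      rw [Set.indicator_apply]; split <;> simp
    calc |h p.1| * |Set.indicator (Set.Ioc t₁ p.1) (fun _ => (1:ℝ)) p.2| ≤ 1 * 1 :=
          mul_le_mul (hb _) h2 (abs_nonneg _) zero_le_one
      _ = 1 := mul_one 1
  have hFi : Integrable (Function.uncurry F) ((volume.restrict J).prod (τ.restrict J)) :=
    (integrable_const (1:ℝ)).mono' hFm.aestronglyMeasurable (Filter.Eventually.of_forall hFb)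
  have step1 : ∫ s in J, h s * (τ (Set.Ioc t₁ s)).toReal = ∫ s in J, ∫ u in J, F s u ∂τ := by
    refine setIntegral_congr_fun hJm fun s hs => ?_
    simp only [hF]
    rw [MeasureTheory.integral_const_mul]
    congr 1
    rw [MeasureTheory.integral_indicator measurableSet_Ioc, setIntegral_const, measureReal_def,
      Measure.restrict_apply measurableSet_Ioc,
      Set.inter_eq_left.2 (Set.Ioc_subset_Ioc le_rfl hs.2), smul_eq_mul, mul_one]
  have step2 := MeasureTheory.integral_integral_swap hFi
  have step3 : ∫ u in J, ∫ s in J, F s u ∂volume ∂τ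
      = ∫ u in J, (∫ s in Set.Ioc u t₂, h s) ∂τ := by
    refine setIntegral_congr_fun hJm fun u hu => ?_
    have hFeq : ∀ s, F s u = Set.indicator (Set.Ici u) h s := by
      intro s
      simp only [hF]
      by_cases hsu : u ≤ s
      · rw [Set.indicator_of_mem (Set.mem_Ioc.2 ⟨hu.1, hsu⟩), mul_one]
        exact (Set.indicator_of_mem (Set.mem_Ici.2 hsu) h).symm
      · rw [Set.indicator_of_notMem (fun c => hsu (Set.mem_Ioc.1 c).2), mul_zero]
        exact (Set.indicator_of_notMem (fun c => hsu (Set.mem_Ici.1 c)) h).symm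
    rw [integral_congr_ae (Filter.Eventually.of_forall hFeq),
      setIntegral_indicator measurableSet_Ici]
    have : J ∩ Set.Ici u = Set.Icc u t₂ := by
      ext x
      simp only [hJ, Set.mem_inter_iff, Set.mem_Ioc, Set.mem_Ici, Set.mem_Icc]
      exact ⟨fun ⟨⟨_, h2⟩, h3⟩ => ⟨h3, h2⟩, fun ⟨h3, h2⟩ => ⟨⟨lt_of_lt_of_le hu.1 h3, h2⟩, h3⟩⟩
    rw [this, integral_Icc_eq_integral_Ioc]
  rw [step1, step2, step3]

/-- A kernel on `[0,T] × {1,…,d}`. -/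
def IsMKernel (d : ℕ) (T : ℝ) (K : ℝ → Fin d → ℝ) : Prop :=
  (∀ i : Fin d, Measurable fun s => K s i) ∧
    ∀ s ∈ Set.Icc (0:ℝ) T, (∀ i : Fin d, 0 ≤ K s i) ∧ ∑ i : Fin d, K s i = 1

/-- For `f(·,i)` continuous on `[0,T]` and of bounded variation on `[t₁,t₂]`, for all
`μ, ν ∈ 𝕄_T` (with kernels `K_μ, K_ν`) and every `i`,
`|∫_{t₁}^{t₂} f(s,i)(K_μ(s,i) − K_ν(s,i)) ds|
  ≤ (|f(t₁,i)| + |f(t₂,i)| + TV(f(·,i);[t₁,t₂]))·d_T(μ,ν)`,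
where `d_T` is the supremum distance on `C([0,T], ℝ^d)` and `TV` the total variation. -/
theorem integral_kernel_diff_bound_BV (d : ℕ) (hd : 1 ≤ d) (T : ℝ) (hT : 0 < T)
    (t₁ t₂ : ℝ) (ht₁ : 0 ≤ t₁) (ht₁₂ : t₁ ≤ t₂) (ht₂ : t₂ ≤ T)
    (f : ℝ → Fin d → ℝ)
    (hfc : ∀ i : Fin d, ContinuousOn (fun s => f s i) (Set.Icc (0:ℝ) T))
    (hfBV : ∀ i : Fin d, BoundedVariationOn (fun s => f s i) (Set.Icc t₁ t₂))
    (μ ν : C(Set.Icc (0:ℝ) T, Fin d → ℝ)) (Kμ Kν : ℝ → Fin d → ℝ)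
    (hKμ : IsMKernel d T Kμ) (hKν : IsMKernel d T Kν)
    (hμ : ∀ t : Set.Icc (0:ℝ) T, ∀ i : Fin d, μ t i = ∫ s in (0:ℝ)..(t:ℝ), Kμ s i)
    (hν : ∀ t : Set.Icc (0:ℝ) T, ∀ i : Fin d, ν t i = ∫ s in (0:ℝ)..(t:ℝ), Kν s i) :
    ∀ i : Fin d,
      |∫ s in t₁..t₂, f s i * (Kμ s i - Kν s i)| ≤
        (|f t₁ i| + |f t₂ i| +
          (eVariationOn (fun s => f s i) (Set.Icc t₁ t₂)).toReal) * dist μ ν := by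
  intro i
  rcases eq_or_lt_of_le ht₁₂ with rfl | h12
  · rw [intervalIntegral.integral_same, abs_zero]
    have h1 : (0:ℝ) ≤ |f t₁ i| + |f t₁ i| +
        (eVariationOn (fun s => f s i) (Set.Icc t₁ t₁)).toReal := by positivity
    exact mul_nonneg h1 dist_nonneg
  set D := dist μ ν with hD
  have hD0 : 0 ≤ D := dist_nonneg
  set g : ℝ → ℝ := fun s => f s i with hg
  set S : Set ℝ := Set.Icc t₁ t₂ with hS
  set J : Set ℝ := Set.Ioc t₁ t₂ with hJdef
  have hJm : MeasurableSet J := measurableSet_Ioc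
  have hJIccsub : J ⊆ Set.Icc 0 T := fun x hx => ⟨le_trans ht₁ hx.1.le, le_trans hx.2 ht₂⟩
  have hSsub : S ⊆ Set.Icc 0 T := fun x hx => ⟨le_trans ht₁ hx.1, le_trans hx.2 ht₂⟩
  have ht1S : t₁ ∈ S := ⟨le_refl _, ht₁₂⟩
  have ht2S : t₂ ∈ S := ⟨ht₁₂, le_refl _⟩
  have hgc : ContinuousOn g S := (hfc i).mono hSsub
  have hlbv : LocallyBoundedVariationOn g S := (hfBV i).locallyBoundedVariationOn
  -- truncated kernel difference
  set h : ℝ → ℝ := fun s => if s ∈ Set.Icc (0:ℝ) T then Kμ s i - Kν s i else 0 with hh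
  have hKle : ∀ (K : ℝ → Fin d → ℝ), IsMKernel d T K → ∀ s ∈ Set.Icc (0:ℝ) T, K s i ≤ 1 := by
    intro K hK s hs
    rcases hK.2 s hs with ⟨hnn, hsum⟩
    calc K s i ≤ ∑ j : Fin d, K s j :=
          Finset.single_le_sum (fun j _ => hnn j) (Finset.mem_univ i)
      _ = 1 := hsum
  have hhb : ∀ s, |h s| ≤ 1 := by
    intro s
    simp only [hh]
    split
    · rename_i hs
      have h1 := (hKμ.2 s hs).1 i
      have h2 := (hKν.2 s hs).1 i
      have h3 := hKle Kμ hKμ s hs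
      have h4 := hKle Kν hKν s hs
      rw [abs_le]; constructor <;> linarith
    · simp
  have hhm : Measurable h :=
    Measurable.ite measurableSet_Icc ((hKμ.1 i).sub (hKν.1 i)) measurable_const
  have hhint : ∀ a b : ℝ, IntervalIntegrable h volume a b := by
    intro a b
    rw [intervalIntegrable_iff]
    refine Measure.integrableOn_of_bounded ?_ hhm.aestronglyMeasurable
      (Filter.Eventually.of_forall fun x => by rw [Real.norm_eq_abs]; exact hhb x)
    exact measure_Ioc_lt_top.ne
  -- the primitive G
  set G : ℝ → ℝ := fun a => ∫ s in (0:ℝ)..a, h s with hG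
  have hGc : Continuous G := intervalIntegral.continuous_primitive hhint 0
  have hGval : ∀ a, ∀ ha : a ∈ Set.Icc (0:ℝ) T, G a = μ ⟨a, ha⟩ i - ν ⟨a, ha⟩ i := by
    intro a ha
    have hcong : Set.EqOn h (fun s => Kμ s i - Kν s i) (Set.uIcc 0 a) := by
      intro x hx
      rw [Set.uIcc_of_le ha.1] at hx
      simp only [hh]
      have hmem : x ∈ Set.Icc (0:ℝ) T := ⟨hx.1, le_trans hx.2 ha.2⟩
      rw [if_pos hmem]
    have hbk : ∀ (K : ℝ → Fin d → ℝ), IsMKernel d T K →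
        IntervalIntegrable (fun s => K s i) volume 0 a := by
      intro K hK
      rw [intervalIntegrable_iff, Set.uIoc_of_le ha.1]
      refine int_bdd_aux measurableSet_Ioc measure_Ioc_lt_top.ne
        (hK.1 i).aestronglyMeasurable (C := 1) ?_
      intro x hx
      have hxT : x ∈ Set.Icc (0:ℝ) T := ⟨hx.1.le, le_trans hx.2 ha.2⟩
      rw [abs_of_nonneg ((hK.2 x hxT).1 i)]
      exact hKle K hK x hxT
    calc G a = ∫ s in (0:ℝ)..a, (Kμ s i - Kν s i) := intervalIntegral.integral_congr hcong
      _ = (∫ s in (0:ℝ)..a, Kμ s i) - ∫ s in (0:ℝ)..a, Kν s i :=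
          intervalIntegral.integral_sub (hbk Kμ hKμ) (hbk Kν hKν)
      _ = μ ⟨a, ha⟩ i - ν ⟨a, ha⟩ i := by rw [hμ ⟨a, ha⟩ i, hν ⟨a, ha⟩ i]
  have hGb : ∀ a ∈ Set.Icc (0:ℝ) T, |G a| ≤ D := by
    intro a ha
    rw [hGval a ha]
    calc |μ ⟨a, ha⟩ i - ν ⟨a, ha⟩ i| = dist (μ ⟨a, ha⟩ i) (ν ⟨a, ha⟩ i) :=
          (Real.dist_eq _ _).symm
      _ ≤ dist (μ ⟨a, ha⟩) (ν ⟨a, ha⟩) := dist_le_pi_dist _ _ i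
      _ ≤ D := ContinuousMap.dist_apply_le_dist _
  have hGsub : ∀ u, t₁ ≤ u → u ≤ t₂ → ∫ s in Set.Ioc u t₂, h s = G t₂ - G u := by
    intro u hu1 hu2
    rw [← intervalIntegral.integral_of_le hu2]
    simp only [hG]
    exact (intervalIntegral.integral_interval_sub_left (hhint 0 t₂) (hhint 0 u)).symm
  -- Jordan decomposition
  set v : ℝ → ℝ := fun x => variationOnFromTo g S t₁ x with hv
  have hvkey : ∀ b ∈ S, ∀ c ∈ S, b ≤ c → |g c - g b| ≤ v c - v b := by
    intro b hb c hc hbc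
    have hvbc : v b + variationOnFromTo g S b c = v c := variationOnFromTo.add hlbv ht1S hb hc
    have h1 : |g c - g b| ≤ variationOnFromTo g S b c := by
      rw [← Real.dist_eq, dist_edist, variationOnFromTo.eq_of_le g S hbc]
      exact ENNReal.toReal_mono (hlbv b c hb hc)
        (eVariationOn.edist_le g ⟨hc, hbc, le_rfl⟩ ⟨hb, le_rfl, hbc⟩)
    linarith
  set proj : ℝ → ℝ := fun x => max t₁ (min t₂ x) with hproj
  have hprojm : Monotone proj := fun a b hab => max_le_max le_rfl (min_le_min le_rfl hab)
  have hprojS : ∀ x, proj x ∈ S := fun x => ⟨le_max_left _ _, max_le ht₁₂ (min_le_left _ _)⟩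
  have hprojid : ∀ x ∈ S, proj x = x := by
    intro x hx
    simp only [hproj]
    rw [min_eq_right hx.2, max_eq_right hx.1]
  have hprojc : Continuous proj := continuous_const.max (continuous_const.min continuous_id)
  have hprojt₂ : ∀ x, t₂ ≤ x → proj x = t₂ := by
    intro x hx; simp only [hproj]; rw [min_eq_left hx, max_eq_right ht₁₂]
  set p : ℝ → ℝ := fun x => (v (proj x) + g (proj x)) / 2 with hp
  set q : ℝ → ℝ := fun x => (v (proj x) - g (proj x)) / 2 with hq
  have hpm : Monotone p := by
    intro a b hab
    have hk := hvkey (proj a) (hprojS a) (proj b) (hprojS b) (hprojm hab)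
    rw [abs_le] at hk
    simp only [hp]
    linarith [hk.1]
  have hqm : Monotone q := by
    intro a b hab
    have hk := hvkey (proj a) (hprojS a) (proj b) (hprojS b) (hprojm hab)
    rw [abs_le] at hk
    simp only [hq]
    linarith [hk.2]
  have hpq_sub : ∀ x ∈ S, p x - q x = g x := by
    intro x hx
    simp only [hp, hq]
    rw [hprojid x hx]; ring
  have hvt1 : v t₁ = 0 := variationOnFromTo.self g S t₁
  have hpq0 : p t₁ + q t₁ = 0 := by
    simp only [hp, hq]
    rw [hprojid t₁ ht1S]
    linarith [hvt1]
  have hTVeq : p t₂ + q t₂ = (eVariationOn g S).toReal := by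
    have hSS : S ∩ Set.Icc t₁ t₂ = S := by rw [hS]; exact Set.inter_self _
    have hvt₂ : v t₂ = (eVariationOn g S).toReal := by
      simp only [hv]
      rw [variationOnFromTo.eq_of_le g S ht₁₂, hSS]
    simp only [hp, hq]
    rw [hprojid t₂ ht2S]
    linarith [hvt₂]
  -- Stieltjes functions
  set σp := hpm.stieltjesFunction with hσp
  set σq := hqm.stieltjesFunction with hσq
  have hσp_eq : ∀ x, σp x = Function.rightLim p x := fun x => hpm.stieltjesFunction_eq x
  have hσq_eq : ∀ x, σq x = Function.rightLim q x := fun x => hqm.stieltjesFunction_eq x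
  have hσpt2 : σp t₂ = p t₂ := by
    rw [hσp_eq]
    refine rightLim_eq_of_eventually_const t₂ fun y hy => ?_
    simp only [hp]
    rw [hprojt₂ y hy.le, hprojt₂ t₂ le_rfl]
  have hσqt2 : σq t₂ = q t₂ := by
    rw [hσq_eq]
    refine rightLim_eq_of_eventually_const t₂ fun y hy => ?_
    simp only [hq]
    rw [hprojt₂ y hy.le, hprojt₂ t₂ le_rfl]
  set Rp := σp t₁ with hRp
  set Rq := σq t₁ with hRq
  have hRp_le : Rp ≤ p t₂ := by rw [hRp, hσp_eq]; exact hpm.rightLim_le h12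
  have hRq_le : Rq ≤ q t₂ := by rw [hRq, hσq_eq]; exact hqm.rightLim_le h12
  have hRp_ge : p t₁ ≤ Rp := by rw [hRp, hσp_eq]; exact hpm.le_rightLim le_rfl
  have hRq_ge : q t₁ ≤ Rq := by rw [hRq, hσq_eq]; exact hqm.le_rightLim le_rfl
  have hRpq : Rp - Rq = g t₁ := by
    have h1 : Filter.Tendsto p (nhdsWithin t₁ (Set.Ioi t₁)) (nhds Rp) := by
      rw [hRp, hσp_eq]; exact hpm.tendsto_rightLim t₁
    have h2 : Filter.Tendsto q (nhdsWithin t₁ (Set.Ioi t₁)) (nhds Rq) := by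
      rw [hRq, hσq_eq]; exact hqm.tendsto_rightLim t₁
    have h3 : Filter.Tendsto (fun x => p x - q x) (nhdsWithin t₁ (Set.Ioi t₁))
        (nhds (Rp - Rq)) := h1.sub h2
    have hceq : (fun x => p x - q x) = g ∘ proj := by
      funext x; simp only [hp, hq, Function.comp]; ring
    have h4 : Filter.Tendsto (fun x => p x - q x) (nhdsWithin t₁ (Set.Ioi t₁)) (nhds (g t₁)) := by
      rw [hceq]
      have hc : Continuous (g ∘ proj) := hgc.comp_continuous hprojc hprojS
      have := hc.tendsto t₁
      have hpt : (g ∘ proj) t₁ = g t₁ := by simp only [Function.comp]; rw [hprojid t₁ ht1S]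
      rw [hpt] at this
      exact this.mono_left nhdsWithin_le_nhds
    exact tendsto_nhds_unique h3 h4
  -- masses
  set Cp := p t₂ - Rp with hCp
  set Cq := q t₂ - Rq with hCq
  have hCp0 : 0 ≤ Cp := by rw [hCp]; linarith
  have hCq0 : 0 ≤ Cq := by rw [hCq]; linarith
  have hmpJ : σp.measure J = ENNReal.ofReal Cp := by
    rw [hJdef, StieltjesFunction.measure_Ioc, hσpt2, hCp, hRp]
  have hmqJ : σq.measure J = ENNReal.ofReal Cq := by
    rw [hJdef, StieltjesFunction.measure_Ioc, hσqt2, hCq, hRq]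
  have hmpJr : (σp.measure J).toReal = Cp := by rw [hmpJ, ENNReal.toReal_ofReal hCp0]
  have hmqJr : (σq.measure J).toReal = Cq := by rw [hmqJ, ENNReal.toReal_ofReal hCq0]
  have hmpJfin : σp.measure J ≠ ⊤ := by rw [hmpJ]; exact ENNReal.ofReal_ne_top
  have hmqJfin : σq.measure J ≠ ⊤ := by rw [hmqJ]; exact ENNReal.ofReal_ne_top
  have hCpq_sub : Cp - Cq = g t₂ - g t₁ := by
    have := hpq_sub t₂ ht2S
    rw [hCp, hCq]; linarith [hRpq]
  have hCpq_add : Cp + Cq ≤ (eVariationOn g S).toReal := by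
    rw [hCp, hCq]; linarith [hTVeq, hpq0, hRp_ge, hRq_ge]
  -- the distribution-function integrands
  set ps : ℝ → ℝ := fun s => (σp.measure (Set.Ioc t₁ s)).toReal with hpsd
  set qs : ℝ → ℝ := fun s => (σq.measure (Set.Ioc t₁ s)).toReal with hqsd
  have hps_eq : ps = fun s => (ENNReal.ofReal (σp s - Rp)).toReal := by
    funext s; simp only [hpsd]; rw [StieltjesFunction.measure_Ioc, hRp]
  have hqs_eq : qs = fun s => (ENNReal.ofReal (σq s - Rq)).toReal := by
    funext s; simp only [hqsd]; rw [StieltjesFunction.measure_Ioc, hRq]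
  have hps_m : Measurable ps := by
    rw [hps_eq]
    exact ENNReal.measurable_toReal.comp (ENNReal.measurable_ofReal.comp
      ((σp.mono.measurable).sub measurable_const))
  have hqs_m : Measurable qs := by
    rw [hqs_eq]
    exact ENNReal.measurable_toReal.comp (ENNReal.measurable_ofReal.comp
      ((σq.mono.measurable).sub measurable_const))
  have hps_bound : ∀ s ∈ J, |ps s| ≤ Cp := by
    intro s hs
    simp only [hpsd]
    rw [abs_of_nonneg ENNReal.toReal_nonneg, ← hmpJr]
    exact ENNReal.toReal_mono hmpJfin (measure_mono (Set.Ioc_subset_Ioc le_rfl hs.2))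
  have hqs_bound : ∀ s ∈ J, |qs s| ≤ Cq := by
    intro s hs
    simp only [hqsd]
    rw [abs_of_nonneg ENNReal.toReal_nonneg, ← hmqJr]
    exact ENNReal.toReal_mono hmqJfin (measure_mono (Set.Ioc_subset_Ioc le_rfl hs.2))
  have hps_val : ∀ s ∈ J, ContinuousAt p s → ps s = p s - Rp := by
    intro s hs hc
    have hσps : σp s = p s := by rw [hσp_eq]; exact rightLim_eq_of_contAt hc
    have hRps : Rp ≤ p s := by rw [hRp, hσp_eq]; exact hpm.rightLim_le hs.1
    simp only [hpsd]
    rw [StieltjesFunction.measure_Ioc, hσps, ← hRp, ENNReal.toReal_ofReal (by linarith)]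
  have hqs_val : ∀ s ∈ J, ContinuousAt q s → qs s = q s - Rq := by
    intro s hs hc
    have hσqs : σq s = q s := by rw [hσq_eq]; exact rightLim_eq_of_contAt hc
    have hRqs : Rq ≤ q s := by rw [hRq, hσq_eq]; exact hqm.rightLim_le hs.1
    simp only [hqsd]
    rw [StieltjesFunction.measure_Ioc, hσqs, ← hRq, ENNReal.toReal_ofReal (by linarith)]
  -- integrability on J
  have hIntc : IntegrableOn (fun s => g t₁ * h s) J volume := by
    refine Integrable.const_mul ?_ _
    exact int_bdd_aux hJm measure_Ioc_lt_top.ne hhm.aestronglyMeasurable (C := 1)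
      (fun x _ => hhb x)
  have hIntp : IntegrableOn (fun s => ps s * h s) J volume := by
    refine int_bdd_aux hJm measure_Ioc_lt_top.ne
      ((hps_m.mul hhm)).aestronglyMeasurable (C := Cp) ?_
    intro x hx
    rw [abs_mul]
    calc |ps x| * |h x| ≤ Cp * 1 :=
          mul_le_mul (hps_bound x hx) (hhb x) (abs_nonneg _) hCp0
      _ = Cp := mul_one _
  have hIntq : IntegrableOn (fun s => qs s * h s) J volume := by
    refine int_bdd_aux hJm measure_Ioc_lt_top.ne
      ((hqs_m.mul hhm)).aestronglyMeasurable (C := Cq) ?_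
    intro x hx
    rw [abs_mul]
    calc |qs x| * |h x| ≤ Cq * 1 :=
          mul_le_mul (hqs_bound x hx) (hhb x) (abs_nonneg _) hCq0
      _ = Cq := mul_one _
  -- a.e. identity
  have hae : ∀ᵐ s ∂(volume.restrict J),
      g s * h s = g t₁ * h s + ps s * h s - qs s * h s := by
    have hcnt : ∀ᵐ x ∂(volume : Measure ℝ),
        x ∉ ({x | ¬ContinuousAt p x} ∪ {x | ¬ContinuousAt q x}) :=
      ((hpm.countable_not_continuousAt).union (hqm.countable_not_continuousAt)).ae_notMem _
    filter_upwards [ae_restrict_of_ae hcnt, ae_restrict_mem hJm] with s hs hsJ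
    have hcp : ContinuousAt p s := by
      by_contra hc; exact hs (Or.inl hc)
    have hcq : ContinuousAt q s := by
      by_contra hc; exact hs (Or.inr hc)
    have e1 := hps_val s hsJ hcp
    have e2 := hqs_val s hsJ hcq
    have e3 : p s - q s = g s := hpq_sub s ⟨hsJ.1.le, hsJ.2⟩
    have : g s = g t₁ + ps s - qs s := by rw [e1, e2]; linarith [hRpq]
    rw [this]; ring
  have hsplit : ∫ s in J, g s * h s
      = (∫ s in J, g t₁ * h s) + (∫ s in J, ps s * h s) - ∫ s in J, qs s * h s := by
    have hIntcp : IntegrableOn (fun s => g t₁ * h s + ps s * h s) J volume :=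
      hIntc.add hIntp
    rw [integral_congr_ae hae, integral_sub hIntcp hIntq, integral_add hIntc hIntp]
  -- Fubini for p
  have hfub : ∀ (σ : StieltjesFunction ℝ) (w : ℝ → ℝ),
      (w = fun s => (σ.measure (Set.Ioc t₁ s)).toReal) → σ.measure J ≠ ⊤ →
      ∫ s in J, w s * h s
        = (σ.measure J).toReal * G t₂ - ∫ u in J, G u ∂σ.measure := by
    intro σ w hw hfin
    set τ := σ.measure.restrict J with hτ
    haveI : IsFiniteMeasure τ := ⟨by rw [hτ, Measure.restrict_apply_univ]; exact hfin.lt_top⟩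
    have e1 : ∫ s in J, w s * h s = ∫ s in J, h s * (τ (Set.Ioc t₁ s)).toReal := by
      refine setIntegral_congr_fun hJm fun s hs => ?_
      rw [hw, mul_comm]
      congr 2
      rw [hτ, Measure.restrict_apply measurableSet_Ioc,
        Set.inter_eq_left.2 (Set.Ioc_subset_Ioc le_rfl hs.2)]
    have e2 : ∫ u in J, (∫ s in Set.Ioc u t₂, h s) ∂τ
        = ∫ u in J, (∫ s in Set.Ioc u t₂, h s) ∂σ.measure := by
      rw [hτ, Measure.restrict_restrict hJm, Set.inter_self]
    have e3 : ∫ u in J, (∫ s in Set.Ioc u t₂, h s) ∂σ.measure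
        = ∫ u in J, (G t₂ - G u) ∂σ.measure :=
      setIntegral_congr_fun hJm fun u hu => hGsub u hu.1.le hu.2
    have hGint : IntegrableOn G J σ.measure :=
      int_bdd_aux hJm hfin hGc.aestronglyMeasurable (C := D)
        (fun x hx => hGb x (hJIccsub hx))
    have e4 : ∫ u in J, (G t₂ - G u) ∂σ.measure
        = (σ.measure J).toReal * G t₂ - ∫ u in J, G u ∂σ.measure := by
      rw [integral_sub (integrableOn_const hfin : IntegrableOn (fun _ => G t₂) J σ.measure) hGint,
        setIntegral_const, smul_eq_mul, measureReal_def]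
    rw [e1, hJdef, fubini_aux t₁ t₂ τ h hhm hhb, ← hJdef, e2, e3, e4]
  have hAp := hfub σp ps hpsd hmpJfin
  have hAq := hfub σq qs hqsd hmqJfin
  set Ip := ∫ u in J, G u ∂σp.measure with hIp
  set Iq := ∫ u in J, G u ∂σq.measure with hIq
  have hIpb : |Ip| ≤ D * Cp := by
    have := norm_setIntegral_le_of_norm_le_const (μ := σp.measure) (s := J) (C := D)
      hmpJfin.lt_top (fun x hx => by rw [Real.norm_eq_abs]; exact hGb x (hJIccsub hx))
    rw [Real.norm_eq_abs, measureReal_def, hmpJr] at this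
    rw [hIp]
    exact this
  have hIqb : |Iq| ≤ D * Cq := by
    have := norm_setIntegral_le_of_norm_le_const (μ := σq.measure) (s := J) (C := D)
      hmqJfin.lt_top (fun x hx => by rw [Real.norm_eq_abs]; exact hGb x (hJIccsub hx))
    rw [Real.norm_eq_abs, measureReal_def, hmqJr] at this
    rw [hIq]
    exact this
  have hintJ : ∫ s in J, h s = G t₂ - G t₁ := hGsub t₁ le_rfl ht₁₂
  have htot : ∫ s in J, g s * h s = g t₂ * G t₂ - g t₁ * G t₁ - Ip + Iq := by
    rw [hsplit, hAp, hAq, MeasureTheory.integral_const_mul, hintJ, hmpJr, hmqJr]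
    linear_combination (G t₂) * hCpq_sub
  have hLHS : ∫ s in t₁..t₂, f s i * (Kμ s i - Kν s i) = ∫ s in J, g s * h s := by
    rw [intervalIntegral.integral_of_le ht₁₂, ← hJdef]
    refine setIntegral_congr_fun hJm fun s hs => ?_
    simp only [hg, hh]
    have hmem : s ∈ Set.Icc (0:ℝ) T := hJIccsub hs
    rw [if_pos hmem]
  rw [hLHS, htot]
  have hb2 : |g t₂ * G t₂| ≤ |g t₂| * D := by
    rw [abs_mul]
    exact mul_le_mul_of_nonneg_left (hGb t₂ ⟨le_trans ht₁ ht₁₂, ht₂⟩) (abs_nonneg _)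
  have hb1 : |g t₁ * G t₁| ≤ |g t₁| * D := by
    rw [abs_mul]
    exact mul_le_mul_of_nonneg_left (hGb t₁ ⟨ht₁, le_trans ht₁₂ ht₂⟩) (abs_nonneg _)
  have htri : |g t₂ * G t₂ - g t₁ * G t₁ - Ip + Iq|
      ≤ |g t₂ * G t₂| + |g t₁ * G t₁| + |Ip| + |Iq| := by
    have a1 := abs_add_le (g t₂ * G t₂ - g t₁ * G t₁ - Ip) Iq
    have a2 := abs_add_le (g t₂ * G t₂ - g t₁ * G t₁) (-Ip)
    have a3 := abs_add_le (g t₂ * G t₂) (-(g t₁ * G t₁))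
    rw [abs_neg] at a2 a3
    rw [← sub_eq_add_neg] at a2 a3
    linarith
  have hfinal : |g t₂| * D + |g t₁| * D + D * Cp + D * Cq
      ≤ (|g t₁| + |g t₂| + (eVariationOn g S).toReal) * D := by
    have hm : D * (Cp + Cq) ≤ D * (eVariationOn g S).toReal :=
      mul_le_mul_of_nonneg_left hCpq_add hD0
    calc |g t₂| * D + |g t₁| * D + D * Cp + D * Cq
        = (|g t₁| + |g t₂|) * D + D * (Cp + Cq) := by ring
      _ ≤ (|g t₁| + |g t₂|) * D + D * (eVariationOn g S).toReal := by linarith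
      _ = (|g t₁| + |g t₂| + (eVariationOn g S).toReal) * D := by ring
  have hgt1 : g t₁ = f t₁ i := rfl
  have hgt2 : g t₂ = f t₂ i := rfl
  rw [← hgt1, ← hgt2]
  calc |g t₂ * G t₂ - g t₁ * G t₁ - Ip + Iq|
      ≤ |g t₂ * G t₂| + |g t₁ * G t₁| + |Ip| + |Iq| := htri
    _ ≤ |g t₂| * D + |g t₁| * D + D * Cp + D * Cq := by linarith
    _ ≤ (|g t₁| + |g t₂| + (eVariationOn g S).toReal) * D := hfinal
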